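/- arXiv:2110.06377 — 3 statements merged into one kernel-verified Lean document; each statement's English description precedes it below -/
import Mathlib

section
/- Let r₁ < 0 < r₃ and r₂ be integers with gcd(r₁, r₂, r₃) = 1, and let v₂ ∈ ℕ. Define S = {α r₁ + β r₂ + γ r₃ : α, γ ∈ ℕ, β ∈ ℕ, β ≤ v₂}. Then S = ℤ if and only if either gcd(r₁, r₃) = 1, or (setting d' = gcd(r₁, r₃) > 1) r₂ ∉ d'ℤ and v₂ ≥ d' − 1. -/
/-- Any multiple of gcd(r1,r3) is a nonnegative combination of r1 and r3
when r1 < 0 < r3. -/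
lemma repA (r1 r3 : ℤ) (h1 : r1 < 0) (h3 : 0 < r3) (m : ℤ)
    (hm : (Int.gcd r1 r3 : ℤ) ∣ m) : ∃ α γ : ℕ, m = (α : ℤ) * r1 + (γ : ℤ) * r3 := by
  set d : ℤ := (Int.gcd r1 r3 : ℤ) with hd
  have hd0 : 0 < d := by
    have : Int.gcd r1 r3 ≠ 0 := by
      simp [Int.gcd_eq_zero_iff]
      intro h; omega
    positivity
  obtain ⟨w, hw⟩ : d ∣ r1 := Int.gcd_dvd_left _ _
  obtain ⟨u, hu⟩ : d ∣ r3 := Int.gcd_dvd_right _ _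
  obtain ⟨k, hk⟩ := hm
  have hw0 : w < 0 := by nlinarith
  have hu0 : 0 < u := by nlinarith
  have hb : d = r1 * Int.gcdA r1 r3 + r3 * Int.gcdB r1 r3 := Int.gcd_eq_gcd_ab r1 r3
  set a := Int.gcdA r1 r3
  set b := Int.gcdB r1 r3
  set t : ℤ := max (|k * a|) (|k * b|) with ht
  have ht0 : 0 ≤ t := le_trans (abs_nonneg _) (le_max_left _ _)
  have hα : 0 ≤ k * a + t * u := by
    have h1' : |k * a| ≤ t := le_max_left _ _
    have : t ≤ t * u := by nlinarith
    have := neg_abs_le (k * a)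
    linarith
  have hγ : 0 ≤ k * b + t * (-w) := by
    have h1' : |k * b| ≤ t := le_max_right _ _
    have : t ≤ t * (-w) := by nlinarith
    have := neg_abs_le (k * b)
    linarith
  refine ⟨(k * a + t * u).toNat, (k * b + t * (-w)).toNat, ?_⟩
  rw [Int.toNat_of_nonneg hα, Int.toNat_of_nonneg hγ]
  have hz : u * r1 + (-w) * r3 = 0 := by rw [hw, hu]; ring
  have : (k * a + t * u) * r1 + (k * b + t * (-w)) * r3
      = k * (r1 * a + r3 * b) + t * (u * r1 + (-w) * r3) := by ring
  rw [this, hz, ← hb, hk]; ring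

theorem stmt_5 (r1 r2 r3 : ℤ) (h1 : r1 < 0) (h3 : 0 < r3)
    (hg : Int.gcd r1 (Int.gcd r2 r3 : ℤ) = 1) (v2 : ℕ) :
    {z : ℤ | ∃ α β γ : ℕ, β ≤ v2 ∧
        z = (α : ℤ) * r1 + (β : ℤ) * r2 + (γ : ℤ) * r3} = Set.univ ↔
      (Int.gcd r1 r3 = 1 ∨
        (¬ ((Int.gcd r1 r3 : ℤ) ∣ r2) ∧ v2 ≥ Int.gcd r1 r3 - 1)) := by
  set d : ℕ := Int.gcd r1 r3 with hdn
  have hd1 : 1 ≤ d := by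
    have : Int.gcd r1 r3 ≠ 0 := by
      simp [Int.gcd_eq_zero_iff]; intro h; omega
    omega
  have hdr1 : (d : ℤ) ∣ r1 := Int.gcd_dvd_left _ _
  have hdr3 : (d : ℤ) ∣ r3 := Int.gcd_dvd_right _ _
  -- gcd(d, r2) = 1
  have hco : Int.gcd (d : ℤ) r2 = 1 := by
    set e : ℕ := Int.gcd (d : ℤ) r2 with he
    have he1 : (e : ℤ) ∣ (d : ℤ) := Int.gcd_dvd_left _ _
    have he2 : (e : ℤ) ∣ r2 := Int.gcd_dvd_right _ _
    have he3 : (e : ℤ) ∣ r3 := he1.trans hdr3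
    have he4 : (e : ℤ) ∣ r1 := he1.trans hdr1
    have : (e : ℤ) ∣ (Int.gcd r1 (Int.gcd r2 r3 : ℤ) : ℤ) :=
      Int.dvd_coe_gcd he4 (Int.dvd_coe_gcd he2 he3)
    rw [hg] at this
    exact_mod_cast Int.eq_one_of_dvd_one (by positivity) this
  -- main equivalence with d ≤ v2 + 1
  have key : {z : ℤ | ∃ α β γ : ℕ, β ≤ v2 ∧
        z = (α : ℤ) * r1 + (β : ℤ) * r2 + (γ : ℤ) * r3} = Set.univ ↔ d ≤ v2 + 1 := by
    constructor
    · intro hS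
      by_contra hlt
      push_neg at hlt
      haveI : NeZero d := ⟨by omega⟩
      set f : Fin (v2 + 1) → ZMod d := fun β => ((β : ℕ) : ZMod d) * (r2 : ZMod d) with hf
      have hns : ¬ Function.Surjective f := by
        intro hs
        have := Fintype.card_le_of_surjective f hs
        simp [ZMod.card] at this
        omega
      rw [Function.Surjective] at hns
      push_neg at hns
      obtain ⟨c, hc⟩ := hns
      have hz : (c.val : ℤ) ∈ {z : ℤ | ∃ α β γ : ℕ, β ≤ v2 ∧
          z = (α : ℤ) * r1 + (β : ℤ) * r2 + (γ : ℤ) * r3} := by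
        rw [hS]; trivial
      obtain ⟨α, β, γ, hβ, heq⟩ := hz
      have hr1z : ((r1 : ℤ) : ZMod d) = 0 := by
        rw [ZMod.intCast_zmod_eq_zero_iff_dvd]; exact hdr1
      have hr3z : ((r3 : ℤ) : ZMod d) = 0 := by
        rw [ZMod.intCast_zmod_eq_zero_iff_dvd]; exact hdr3
      have hcast : ((c.val : ℤ) : ZMod d) = c := by
        push_cast
        simp [ZMod.natCast_val, ZMod.cast_id]
      apply hc ⟨β, by omega⟩
      have : ((c.val : ℤ) : ZMod d) = ((α : ℤ) * r1 + (β : ℤ) * r2 + (γ : ℤ) * r3 : ℤ) := by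
        rw [heq]
      rw [hcast] at this
      push_cast at this
      rw [hr1z, hr3z] at this
      simp at this
      simp [hf]
      exact this.symm
    · intro hle
      ext z
      simp only [Set.mem_setOf_eq, Set.mem_univ, iff_true]
      -- Bezout for d and r2
      have hb : (1 : ℤ) = (d : ℤ) * Int.gcdA (d : ℤ) r2 + r2 * Int.gcdB (d : ℤ) r2 := by
        have := Int.gcd_eq_gcd_ab (d : ℤ) r2
        rw [hco] at this
        exact_mod_cast this
      set x := Int.gcdA (d : ℤ) r2
      set y := Int.gcdB (d : ℤ) r2
      have hdpos : (0 : ℤ) < (d : ℤ) := by exact_mod_cast hd1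
      set B : ℤ := (z * y) % (d : ℤ) with hB
      have hB0 : 0 ≤ B := Int.emod_nonneg _ (by omega)
      have hBd : B < (d : ℤ) := Int.emod_lt_of_pos _ hdpos
      have hβ : B.toNat ≤ v2 := by omega
      have hdvd1 : (d : ℤ) ∣ (z * y - B) := Int.dvd_self_sub_of_emod_eq rfl
      have hdvd : (d : ℤ) ∣ (z - B * r2) := by
        have : z - B * r2 = (d : ℤ) * (z * x) + r2 * (z * y - B) := by
          have : z * 1 = z * ((d : ℤ) * x + r2 * y) := by rw [← hb]
          nlinarith [this]
        rw [this]
        exact dvd_add ⟨z * x, rfl⟩ (Dvd.dvd.mul_left hdvd1 r2)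
      obtain ⟨α, γ, hαγ⟩ := repA r1 r3 h1 h3 (z - B * r2) hdvd
      refine ⟨α, B.toNat, γ, hβ, ?_⟩
      rw [Int.toNat_of_nonneg hB0]
      linarith
  rw [key]
  constructor
  · intro h
    by_cases hd : d = 1
    · left; exact hd
    · right
      constructor
      · intro hdvd
        have : (d : ℤ) ∣ (Int.gcd (d : ℤ) r2 : ℤ) := Int.dvd_coe_gcd dvd_rfl hdvd
        rw [hco] at this
        have : d ∣ 1 := by exact_mod_cast this
        exact hd (Nat.dvd_one.mp this)
      · omega
  · rintro (h | ⟨h, h'⟩) <;> omega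
end

section
/- Let r₁ < 0 < r₃ be integers, d' = gcd(r₁, r₃), r₂ an integer with gcd(d', r₂) = 1 and d' > 1, and v₂ ∈ ℕ. If the set S = {α r₁ + β r₂ + γ r₃ : α, γ ∈ ℕ, 0 ≤ β ≤ v₂} equals ℤ, then v₂ ≥ d' − 1. -/
theorem stmt_8 (r1 r2 r3 : ℤ) (h1 : r1 < 0) (h3 : 0 < r3)
    (hd : 1 < Int.gcd r1 r3) (hc : Int.gcd (Int.gcd r1 r3 : ℤ) r2 = 1) (v2 : ℕ)
    (hfull : {z : ℤ | ∃ α β γ : ℕ, β ≤ v2 ∧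
        z = (α : ℤ) * r1 + (β : ℤ) * r2 + (γ : ℤ) * r3} = Set.univ) :
    v2 ≥ Int.gcd r1 r3 - 1 := by
  have hmem : (-r2) ∈ {z : ℤ | ∃ α β γ : ℕ, β ≤ v2 ∧
      z = (α : ℤ) * r1 + (β : ℤ) * r2 + (γ : ℤ) * r3} := by
    rw [hfull]; trivial
  obtain ⟨α, β, γ, hβ, heq⟩ := hmem
  set d : ℕ := Int.gcd r1 r3 with hdd
  have hd1 : (d : ℤ) ∣ r1 := Int.gcd_dvd_left r1 r3
  have hd3 : (d : ℤ) ∣ r3 := Int.gcd_dvd_right r1 r3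
  have hmul : (d : ℤ) ∣ ((β : ℤ) + 1) * r2 := by
    have : ((β : ℤ) + 1) * r2 = -((α : ℤ) * r1 + (γ : ℤ) * r3) := by linarith [heq]
    rw [this]
    exact ((hd1.mul_left _).add (hd3.mul_left _)).neg_right
  have hcop : IsCoprime (d : ℤ) r2 := Int.isCoprime_iff_gcd_eq_one.mpr (by
    simpa using hc)
  have hdvd : (d : ℤ) ∣ ((β : ℤ) + 1) := (hcop.dvd_of_dvd_mul_right hmul)
  have hle : (d : ℤ) ≤ (β : ℤ) + 1 := Int.le_of_dvd (by positivity) hdvd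
  omega
end

section
/- Let r₁ < 0 < r₂ be integers with gcd(r₁, r₂) = 1, and let α, β, α', β' be the (unique) nonnegative integers minimizing α + β and α' + β' subject to 1 = α r₁ + β r₂ and −1 = α' r₁ + β' r₂. If both α + β and α' + β' are even, then for every integer z there exist nonnegative integers x, y with z = x r₁ + y r₂ and x + y even. -/
theorem stmt_14 (r1 r2 : ℤ) (h1 : r1 < 0) (h2 : 0 < r2) (h : Int.gcd r1 r2 = 1)
    (α β α' β' : ℕ)
    (hαβ : (1 : ℤ) = (α : ℤ) * r1 + (β : ℤ) * r2)
    (hmin : ∀ a b : ℕ, (1 : ℤ) = (a : ℤ) * r1 + (b : ℤ) * r2 → α + β ≤ a + b)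
    (hαβ' : (-1 : ℤ) = (α' : ℤ) * r1 + (β' : ℤ) * r2)
    (hmin' : ∀ a b : ℕ, (-1 : ℤ) = (a : ℤ) * r1 + (b : ℤ) * r2 → α' + β' ≤ a + b)
    (heven : Even (α + β)) (heven' : Even (α' + β')) :
    ∀ z : ℤ, ∃ x y : ℕ, z = (x : ℤ) * r1 + (y : ℤ) * r2 ∧ Even (x + y) := by
  intro z
  rcases le_or_gt 0 z with hz | hz
  · refine ⟨z.toNat * α, z.toNat * β, ?_, ?_⟩
    · push_cast [Int.toNat_of_nonneg hz]
      linear_combination z * hαβ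
    · rw [← Nat.mul_add]
      exact heven.mul_left _
  · refine ⟨(-z).toNat * α', (-z).toNat * β', ?_, ?_⟩
    · push_cast [Int.toNat_of_nonneg (by omega : (0:ℤ) ≤ -z)]
      linear_combination (-z) * hαβ'
    · rw [← Nat.mul_add]
      exact heven'.mul_left _
end
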